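/- Let C be a delay-free, non-catastrophic (n,k,δ) convolutional code over F_q. Then the free distance equals the limit of the column distances: d_free(C) = lim_{j→∞} d_j^c(C). (Equivalently, since the column distances are a non-decreasing integer sequence bounded by d_free, they are eventually constant equal to d_free.) -/

import Mathlib

open Polynomial Matrix

noncomputable def wtTrunc {F : Type*} [Field F] {n : ℕ} (j : ℕ)
    (v : Fin n → Polynomial F) : ℕ :=
  {p : ℕ × Fin n | p.1 ≤ j ∧ (v p.2).coeff p.1 ≠ 0}.ncard

noncomputable def wtFull {F : Type*} [Field F] {n : ℕ} (v : Fin n → Polynomial F) : ℕ :=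
  {p : ℕ × Fin n | (v p.2).coeff p.1 ≠ 0}.ncard

noncomputable def colDist {F : Type*} [Field F] {n : ℕ}
    (C : Submodule (Polynomial F) (Fin n → Polynomial F)) (j : ℕ) : ℕ :=
  sInf {w | ∃ v ∈ C, (fun t => (v t).coeff 0) ≠ (0 : Fin n → F) ∧ w = wtTrunc j v}

noncomputable def freeDist {F : Type*} [Field F] {n : ℕ}
    (C : Submodule (Polynomial F) (Fin n → Polynomial F)) : ℕ :=
  sInf {w | ∃ v ∈ C, v ≠ 0 ∧ w = wtFull v}

def IsEncoder {F : Type*} [Field F] {k n : ℕ}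
    (C : Submodule (Polynomial F) (Fin n → Polynomial F))
    (G : Matrix (Fin k) (Fin n) (Polynomial F)) : Prop :=
  LinearIndependent (Polynomial F) (fun i : Fin k => fun t => G i t) ∧
    Submodule.span (Polynomial F) (Set.range (fun i : Fin k => fun t => G i t)) = C

def IsDelayFree {F : Type*} [Field F] {k n : ℕ}
    (G : Matrix (Fin k) (Fin n) (Polynomial F)) : Prop :=
  LinearIndependent F (fun i : Fin k => fun t => (G i t).coeff 0)

noncomputable def codeDegree {F : Type*} [Field F] {k n : ℕ}
    (G : Matrix (Fin k) (Fin n) (Polynomial F)) : ℕ :=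
  Finset.univ.sup fun φ : Fin k → Fin n => ((G.submatrix id φ).det).natDegree

noncomputable def rowDegSum {F : Type*} [Field F] {k n : ℕ}
    (G : Matrix (Fin k) (Fin n) (Polynomial F)) : ℕ :=
  ∑ i : Fin k, Finset.univ.sup fun t : Fin n => (G i t).natDegree

noncomputable def Gcoeff {F : Type*} [Field F] {k n : ℕ}
    (G : Matrix (Fin k) (Fin n) (Polynomial F)) (i : ℕ) : Matrix (Fin k) (Fin n) F :=
  fun a b => (G a b).coeff i

section Aux

variable {F : Type*} [Field F] {n : ℕ}

/-- Truncation of a polynomial to degrees ≤ a. -/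
noncomputable def truncP (a : ℕ) (p : Polynomial F) : Polynomial F :=
  ∑ i ∈ Finset.range (a+1), Polynomial.monomial i (p.coeff i)

lemma truncP_coeff (a : ℕ) (p : Polynomial F) (c : ℕ) :
    (truncP a p).coeff c = if c ≤ a then p.coeff c else 0 := by
  rw [truncP, Polynomial.finset_sum_coeff]
  simp only [Polynomial.coeff_monomial]
  rw [Finset.sum_ite_eq' (Finset.range (a+1)) c (fun i => p.coeff i)]
  simp [Nat.lt_succ_iff]

lemma wtFull_finite (v : Fin n → Polynomial F) :
    {p : ℕ × Fin n | (v p.2).coeff p.1 ≠ 0}.Finite := by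
  apply Set.Finite.subset
    ((Finset.range ((Finset.univ.sup fun s => (v s).natDegree) + 1) ×ˢ
      (Finset.univ : Finset (Fin n))).finite_toSet)
  rintro ⟨c, s⟩ h
  simp only [Set.mem_setOf_eq] at h
  simp only [Finset.coe_product, Set.mem_prod, Finset.mem_coe, Finset.mem_range,
    Finset.mem_univ, and_true]
  have h1 := Polynomial.le_natDegree_of_ne_zero h
  have h2 : (v s).natDegree ≤ Finset.univ.sup fun s => (v s).natDegree :=
    Finset.le_sup (f := fun s => (v s).natDegree) (Finset.mem_univ s)
  omega

lemma wtTrunc_subset_wtFull (j : ℕ) (v : Fin n → Polynomial F) :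
    {p : ℕ × Fin n | p.1 ≤ j ∧ (v p.2).coeff p.1 ≠ 0} ⊆
      {p : ℕ × Fin n | (v p.2).coeff p.1 ≠ 0} := fun _ hp => hp.2

lemma wtTrunc_le_wtFull (j : ℕ) (v : Fin n → Polynomial F) :
    wtTrunc j v ≤ wtFull v :=
  Set.ncard_le_ncard (wtTrunc_subset_wtFull j v) (wtFull_finite v)

lemma wtTrunc_mono {j j' : ℕ} (h : j ≤ j') (v : Fin n → Polynomial F) :
    wtTrunc j v ≤ wtTrunc j' v := by
  apply Set.ncard_le_ncard
  · rintro ⟨c, s⟩ ⟨h1, h2⟩; exact ⟨le_trans h1 h, h2⟩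
  · exact (wtFull_finite v).subset (wtTrunc_subset_wtFull j' v)

lemma wtFull_truncP (a : ℕ) (v : Fin n → Polynomial F) :
    wtFull (fun s => truncP a (v s)) = wtTrunc a v := by
  unfold wtFull wtTrunc
  congr 1
  ext ⟨c, s⟩
  simp only [Set.mem_setOf_eq, truncP_coeff]
  by_cases h : c ≤ a <;> simp [h]

lemma wtFull_X_mul (w : Fin n → Polynomial F) :
    wtFull (fun s => Polynomial.X * w s) = wtFull w := by
  unfold wtFull
  have himg : {p : ℕ × Fin n | (Polynomial.X * w p.2).coeff p.1 ≠ 0} =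
      (fun p : ℕ × Fin n => (p.1 + 1, p.2)) '' {p : ℕ × Fin n | (w p.2).coeff p.1 ≠ 0} := by
    ext ⟨c, s⟩
    simp only [Set.mem_setOf_eq, Set.mem_image, Prod.mk.injEq, Prod.exists]
    constructor
    · intro h
      cases c with
      | zero => simp [Polynomial.mul_coeff_zero] at h
      | succ m => exact ⟨m, s, by rwa [Polynomial.coeff_X_mul] at h, rfl, rfl⟩
    · rintro ⟨m, s', h, rfl, rfl⟩
      rwa [Polynomial.coeff_X_mul]
  rw [himg, Set.ncard_image_of_injective]
  rintro ⟨a, b⟩ ⟨a', b'⟩ h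
  simp only [Prod.mk.injEq] at h
  exact Prod.ext (by omega) h.2

lemma vecMul_coeff (w : Fin n → Polynomial F) (E : Matrix (Fin n) (Fin n) (Polynomial F))
    (t : Fin n) (c : ℕ) :
    (Matrix.vecMul w E t).coeff c
      = ∑ s : Fin n, ∑ x ∈ Finset.HasAntidiagonal.antidiagonal c, (w s).coeff x.1 * (E s t).coeff x.2 := by
  simp [Matrix.vecMul, dotProduct, Polynomial.finset_sum_coeff, Polynomial.coeff_mul]

lemma gap_fixed (E : Matrix (Fin n) (Fin n) (Polynomial F)) (D : ℕ)
    (hD : ∀ s t, (E s t).natDegree ≤ D) (v : Fin n → Polynomial F)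
    (hv : Matrix.vecMul v E = v) (a : ℕ)
    (hgap : ∀ s c, a < c → c ≤ a + D → (v s).coeff c = 0) :
    Matrix.vecMul (fun s => truncP a (v s)) E = (fun s => truncP a (v s)) := by
  funext t
  ext c
  rw [vecMul_coeff]
  have hvc : ∑ s : Fin n, ∑ x ∈ Finset.HasAntidiagonal.antidiagonal c, (v s).coeff x.1 * (E s t).coeff x.2
      = (v t).coeff c := by
    rw [← vecMul_coeff, hv]
  by_cases hc : c ≤ a + D
  · have heq : ∀ s : Fin n, ∀ x ∈ Finset.HasAntidiagonal.antidiagonal c,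
        (truncP a (v s)).coeff x.1 * (E s t).coeff x.2
          = (v s).coeff x.1 * (E s t).coeff x.2 := by
      intro s x hx
      rw [Finset.HasAntidiagonal.mem_antidiagonal] at hx
      rw [truncP_coeff]
      by_cases h1 : x.1 ≤ a
      · simp [h1]
      · rw [if_neg h1, (hgap s x.1 (by omega) (by omega)), zero_mul]
    calc ∑ s : Fin n, ∑ x ∈ Finset.HasAntidiagonal.antidiagonal c,
          (truncP a (v s)).coeff x.1 * (E s t).coeff x.2
        = ∑ s : Fin n, ∑ x ∈ Finset.HasAntidiagonal.antidiagonal c, (v s).coeff x.1 * (E s t).coeff x.2 :=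
          Finset.sum_congr rfl fun s _ => Finset.sum_congr rfl (heq s)
      _ = (v t).coeff c := hvc
      _ = (truncP a (v t)).coeff c := by
          rw [truncP_coeff]
          by_cases h1 : c ≤ a
          · rw [if_pos h1]
          · rw [if_neg h1, hgap t c (by omega) hc]
  · rw [truncP_coeff, if_neg (by omega)]
    apply Finset.sum_eq_zero
    intro s _
    apply Finset.sum_eq_zero
    rintro ⟨x1, x2⟩ hx
    rw [Finset.HasAntidiagonal.mem_antidiagonal] at hx
    by_cases h1 : x1 ≤ a
    · have h2 : (E s t).coeff x2 = 0 :=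
        Polynomial.coeff_eq_zero_of_natDegree_lt (by have := hD s t; omega)
      simp [h2]
    · simp [truncP_coeff, h1]

lemma shift_lemma (E : Matrix (Fin n) (Fin n) (Polynomial F)) :
    ∀ M : ℕ, ∀ v : Fin n → Polynomial F, (∑ s, (v s).natDegree) = M →
      Matrix.vecMul v E = v → v ≠ 0 →
      ∃ w : Fin n → Polynomial F, Matrix.vecMul w E = w ∧
        (fun t => (w t).coeff 0) ≠ (0 : Fin n → F) ∧ wtFull w = wtFull v := by
  intro M
  induction M using Nat.strong_induction_on with
  | _ M ih =>
    intro v hM hv hne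
    by_cases h0 : (fun t => (v t).coeff 0) ≠ (0 : Fin n → F)
    · exact ⟨v, hv, h0, rfl⟩
    · push_neg at h0
      have h0' : ∀ s, (v s).coeff 0 = 0 := fun s => congrFun h0 s
      have hdvd : ∀ s, ∃ q, v s = Polynomial.X * q := by
        intro s
        obtain ⟨q, hq⟩ := Polynomial.X_dvd_iff.mpr (h0' s)
        exact ⟨q, hq⟩
      choose w hw using hdvd
      have hvw : v = fun s => Polynomial.X * w s := funext hw
      have hwE : Matrix.vecMul w E = w := by
        funext t
        apply mul_left_cancel₀ (Polynomial.X_ne_zero (R := F))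
        have h1 : Matrix.vecMul v E t = Polynomial.X * Matrix.vecMul w E t := by
          simp only [Matrix.vecMul, dotProduct]
          rw [Finset.mul_sum]
          exact Finset.sum_congr rfl fun s _ => by rw [hw s, mul_assoc]
        rw [← h1, hv, hw t]
      have hwne : w ≠ 0 := by
        intro h
        apply hne
        funext s
        simp [hw s, congrFun h s]
      obtain ⟨s0, hs0⟩ : ∃ s0, w s0 ≠ 0 := by
        by_contra h; push_neg at h; exact hwne (funext h)
      have hlt : (∑ s, (w s).natDegree) < M := by
        rw [← hM]
        apply Finset.sum_lt_sum
        · intro s _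
          rw [hw s]
          by_cases h : w s = 0
          · simp [h]
          · rw [Polynomial.natDegree_mul Polynomial.X_ne_zero h, Polynomial.natDegree_X]
            omega
        · refine ⟨s0, Finset.mem_univ s0, ?_⟩
          rw [hw s0, Polynomial.natDegree_mul Polynomial.X_ne_zero hs0,
            Polynomial.natDegree_X]
          omega
      obtain ⟨w', hw'E, hw'0, hw'wt⟩ := ih _ hlt w rfl hwE hwne
      refine ⟨w', hw'E, hw'0, ?_⟩
      rw [hw'wt, hvw, wtFull_X_mul]

lemma exists_right_inverse {k : ℕ} (G : Matrix (Fin k) (Fin n) (Polynomial F))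
    (hnc : Ideal.span
      {m : Polynomial F | ∃ φ : Fin k → Fin n, m = (G.submatrix id φ).det} = ⊤) :
    ∃ R : Matrix (Fin n) (Fin k) (Polynomial F), G * R = 1 := by
  have h1 : (1 : Polynomial F) ∈ Ideal.span
      {m : Polynomial F | ∃ φ : Fin k → Fin n, m = (G.submatrix id φ).det} := by
    rw [hnc]; trivial
  obtain ⟨c, hsupp, hsum⟩ := Submodule.mem_span_set.mp h1
  have hφ : ∀ m ∈ c.support, ∃ φ : Fin k → Fin n, m = (G.submatrix id φ).det :=
    fun m hm => hsupp hm
  set Rfor : (Fin k → Fin n) → Matrix (Fin n) (Fin k) (Polynomial F) :=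
    fun φ => fun t i => ∑ s : Fin k, if φ s = t then (G.submatrix id φ).adjugate s i else 0
    with hRfor
  have key : ∀ φ : Fin k → Fin n, G * Rfor φ = (G.submatrix id φ).det • 1 := by
    intro φ
    ext i j : 1
    rw [Matrix.mul_apply]
    simp only [Matrix.mul_apply, hRfor, Finset.mul_sum, mul_ite, mul_zero]
    rw [Finset.sum_comm]
    have h2 : ∀ s : Fin k, (∑ t : Fin n, if φ s = t then G i t * (G.submatrix id φ).adjugate s j
        else 0) = G i (φ s) * (G.submatrix id φ).adjugate s j := by
      intro s
      rw [Finset.sum_ite_eq Finset.univ (φ s) (fun t => G i t * (G.submatrix id φ).adjugate s j)]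
      simp
    simp_rw [h2]
    have h3 := congrFun (congrFun (Matrix.mul_adjugate (G.submatrix id φ)) i) j
    simp only [Matrix.mul_apply, Matrix.submatrix_apply, id_eq] at h3
    rw [h3]
  refine ⟨∑ m ∈ c.support.attach, c m • Rfor (Classical.choose (hφ m m.2)), ?_⟩
  rw [Matrix.mul_sum]
  have h4 : ∀ m : c.support, G * (c m • Rfor (Classical.choose (hφ m m.2)))
      = (c m * (m : Polynomial F)) • (1 : Matrix (Fin k) (Fin k) (Polynomial F)) := by
    intro m
    rw [Matrix.mul_smul, key, smul_smul]
    congr 1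
    rw [← Classical.choose_spec (hφ m m.2)]
  simp_rw [h4]
  rw [← Finset.sum_smul]
  have h5 : ∑ m ∈ c.support.attach, c m * (m : Polynomial F) = 1 := by
    rw [Finset.sum_attach c.support (fun m => c m * m)]
    rw [← hsum, Finsupp.sum]
    simp [smul_eq_mul]
  rw [h5, one_smul]

end Aux

set_option maxHeartbeats 2000000 in
theorem stmt5 {F : Type*} [Field F] [Fintype F] {n k δ : ℕ}
    (C : Submodule (Polynomial F) (Fin n → Polynomial F))
    (G : Matrix (Fin k) (Fin n) (Polynomial F))
    (hG : IsEncoder C G) (hdf : IsDelayFree G) (hdeg : codeDegree G = δ)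
    (hnc : Ideal.span
      {m : Polynomial F | ∃ φ : Fin k → Fin n, m = (G.submatrix id φ).det} = ⊤) :
    ∃ N : ℕ, ∀ j ≥ N, colDist C j = freeDist C := by
  classical
  obtain ⟨R, hGR⟩ := exists_right_inverse G hnc
  set E : Matrix (Fin n) (Fin n) (Polynomial F) := R * G with hE
  -- membership criterion
  have hbr : ∀ u : Fin k → Polynomial F,
      (∑ i, u i • (fun t => G i t)) = Matrix.vecMul u G := by
    intro u
    funext t
    simp [Matrix.vecMul, dotProduct, Finset.sum_apply]
  have hmem : ∀ v : Fin n → Polynomial F, v ∈ C ↔ Matrix.vecMul v E = v := by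
    intro v
    rw [← hG.2, Submodule.mem_span_range_iff_exists_fun]
    constructor
    · rintro ⟨u, hu⟩
      rw [← hu, hbr, Matrix.vecMul_vecMul, hE, ← Matrix.mul_assoc, hGR, Matrix.one_mul]
    · intro h
      refine ⟨Matrix.vecMul v R, ?_⟩
      rw [hbr, Matrix.vecMul_vecMul]
      exact h
  set D : ℕ := Finset.univ.sup (fun p : Fin n × Fin n => (E p.1 p.2).natDegree) with hDdef
  have hD : ∀ s t : Fin n, (E s t).natDegree ≤ D := fun s t =>
    Finset.le_sup (f := fun p : Fin n × Fin n => (E p.1 p.2).natDegree)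
      (b := (s, t)) (Finset.mem_univ _)
  by_cases hC0 : ∃ v ∈ C, v ≠ 0
  · obtain ⟨v1, hv1C, hv1ne⟩ := hC0
    -- free distance set is nonempty
    have hSfree : {w | ∃ v ∈ C, v ≠ 0 ∧ w = wtFull v}.Nonempty :=
      ⟨wtFull v1, v1, hv1C, hv1ne, rfl⟩
    set d : ℕ := freeDist C with hd
    obtain ⟨vmin, hminC, hminne, hminwt⟩ : d ∈ {w | ∃ v ∈ C, v ≠ 0 ∧ w = wtFull v} :=
      Nat.sInf_mem hSfree
    obtain ⟨vdag, hdagE, hdag0, hdagwt⟩ :=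
      shift_lemma E (∑ s, (vmin s).natDegree) vmin rfl ((hmem vmin).mp hminC) hminne
    have hdagC : vdag ∈ C := (hmem vdag).mpr hdagE
    -- upper bound
    have hub : ∀ j : ℕ, colDist C j ≤ d := by
      intro j
      have hmem' : wtTrunc j vdag ∈
          {w | ∃ v ∈ C, (fun t => (v t).coeff 0) ≠ (0 : Fin n → F) ∧ w = wtTrunc j v} :=
        ⟨vdag, hdagC, hdag0, rfl⟩
      calc colDist C j ≤ wtTrunc j vdag := Nat.sInf_le hmem'
        _ ≤ wtFull vdag := wtTrunc_le_wtFull j vdag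
        _ = d := by rw [hdagwt, ← hminwt]
    refine ⟨d * (D + 1) + D + 1, fun j hj => ?_⟩
    -- lower bound: every element of the colDist set is ≥ d
    have hlb : ∀ w ∈ {w | ∃ v ∈ C, (fun t => (v t).coeff 0) ≠ (0 : Fin n → F) ∧
        w = wtTrunc j v}, d ≤ w := by
      rintro w ⟨v, hvC, hv0, rfl⟩
      by_contra hwd
      push_neg at hwd
      set T : Set ℕ := {c | c ≤ j ∧ ∃ s, (v s).coeff c ≠ 0} with hT
      have hTfin : T.Finite := by
        apply Set.Finite.subset (Finset.range (j+1)).finite_toSet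
        intro c hc
        simp only [Finset.coe_range, Set.mem_Iio]
        exact Nat.lt_succ_of_le hc.1
      have hPfin : {p : ℕ × Fin n | p.1 ≤ j ∧ (v p.2).coeff p.1 ≠ 0}.Finite :=
        (wtFull_finite v).subset (wtTrunc_subset_wtFull j v)
      have hTcard : T.ncard ≤ wtTrunc j v := by
        have hsub : T ⊆ Prod.fst '' {p : ℕ × Fin n | p.1 ≤ j ∧ (v p.2).coeff p.1 ≠ 0} := by
          rintro c ⟨hcj, s, hs⟩
          exact ⟨(c, s), ⟨hcj, hs⟩, rfl⟩
        calc T.ncard ≤ (Prod.fst '' {p : ℕ × Fin n | p.1 ≤ j ∧ (v p.2).coeff p.1 ≠ 0}).ncard :=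
              Set.ncard_le_ncard hsub (hPfin.image _)
          _ ≤ wtTrunc j v := Set.ncard_image_le hPfin
      -- pigeonhole: some window is free of T
      have hwin : ∃ m : ℕ, m < d ∧ ∀ c : ℕ, m * (D + 1) < c → c ≤ m * (D + 1) + D →
          c ∉ T := by
        by_contra hall
        push_neg at hall
        have hall' : ∀ m : Fin d, ∃ c : ℕ, m.val * (D + 1) < c ∧ c ≤ m.val * (D + 1) + D ∧
            c ∈ T := fun m => hall m.val m.isLt
        choose g hg1 hg2 hg3 using hall'
        have hginj : Function.Injective g := by
          have hmono : ∀ m m' : Fin d, m.val < m'.val → g m < g m' := by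
            intro m m' hmm
            calc g m ≤ m.val * (D + 1) + D := hg2 m
              _ < (m.val + 1) * (D + 1) := by rw [Nat.succ_mul]; omega
              _ ≤ m'.val * (D + 1) := Nat.mul_le_mul_right _ (by omega)
              _ < g m' := hg1 m'
          intro x y h
          by_contra hxy
          rcases lt_trichotomy x.val y.val with h1 | h1 | h1
          · exact absurd h (ne_of_lt (hmono x y h1))
          · exact hxy (Fin.ext h1)
          · exact absurd h.symm (ne_of_lt (hmono y x h1))
        have hrange : Set.range g ⊆ T := by
          rintro c ⟨m, rfl⟩; exact hg3 m
        have : d ≤ T.ncard := by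
          calc d = Nat.card (Fin d) := by simp
            _ = (Set.univ : Set (Fin d)).ncard := (Set.ncard_univ _).symm
            _ = (g '' Set.univ).ncard := (Set.ncard_image_of_injective _ hginj).symm
            _ = (Set.range g).ncard := by rw [Set.image_univ]
            _ ≤ T.ncard := Set.ncard_le_ncard hrange hTfin
        omega
      obtain ⟨m, hmd, hgapwin⟩ := hwin
      set a : ℕ := m * (D + 1) with ha
      have haDj : a + D < j := by
        have h1 : (m + 1) * (D + 1) ≤ d * (D + 1) := Nat.mul_le_mul_right _ (by omega)
        have h2 : (m + 1) * (D + 1) = m * (D + 1) + (D + 1) := by rw [Nat.succ_mul]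
        omega
      have hgap : ∀ s c, a < c → c ≤ a + D → (v s).coeff c = 0 := by
        intro s c h1 h2
        have hcT : c ∉ T := hgapwin c h1 h2
        simp only [hT, Set.mem_setOf_eq, not_and, not_exists, not_not] at hcT
        exact hcT (by omega) s
      have hv'E := gap_fixed E D hD v ((hmem v).mp hvC) a hgap
      have hv'C : (fun s => truncP a (v s)) ∈ C := (hmem _).mpr hv'E
      have hv'ne : (fun s => truncP a (v s)) ≠ 0 := by
        intro h
        apply hv0
        funext t
        have h1 := congrFun h t
        have h2 : (truncP a (v t)).coeff 0 = (v t).coeff 0 := by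
          rw [truncP_coeff]; simp
        rw [h1] at h2
        simp only [Pi.zero_apply] at h2 ⊢
        rw [← h2]
        simp
      have hmemfree : wtFull (fun s => truncP a (v s)) ∈
          {w | ∃ v ∈ C, v ≠ 0 ∧ w = wtFull v} := ⟨_, hv'C, hv'ne, rfl⟩
      have hge : d ≤ wtFull (fun s => truncP a (v s)) := Nat.sInf_le hmemfree
      have hle : wtFull (fun s => truncP a (v s)) ≤ wtTrunc j v := by
        rw [wtFull_truncP]
        exact wtTrunc_mono (by omega) v
      omega
    -- conclude
    have hSne : {w | ∃ v ∈ C, (fun t => (v t).coeff 0) ≠ (0 : Fin n → F) ∧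
        w = wtTrunc j v}.Nonempty := ⟨wtTrunc j vdag, vdag, hdagC, hdag0, rfl⟩
    have hmemcd := Nat.sInf_mem hSne
    have h1 : d ≤ colDist C j := hlb _ hmemcd
    have h2 := hub j
    omega
  · -- C has no nonzero elements
    push_neg at hC0
    refine ⟨0, fun j _ => ?_⟩
    have h1 : {w | ∃ v ∈ C, (fun t => (v t).coeff 0) ≠ (0 : Fin n → F) ∧
        w = wtTrunc j v} = ∅ := by
      rw [Set.eq_empty_iff_forall_notMem]
      rintro w ⟨v, hvC, hv0, _⟩
      apply hv0
      rw [hC0 v hvC]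
      funext t; simp
    have h2 : {w | ∃ v ∈ C, v ≠ 0 ∧ w = wtFull v} = ∅ := by
      rw [Set.eq_empty_iff_forall_notMem]
      rintro w ⟨v, hvC, hvne, _⟩
      exact hvne (hC0 v hvC)
    rw [colDist, freeDist, h1, h2]
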